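/- arXiv:1910.07473 — 2 statements merged into one kernel-verified Lean document; each statement's English description precedes it below -/
import Mathlib

section
/- Let K ⊂ ℂ be compact and let Y_n : K → M₂(ℂ) be continuous maps (n ≥ 1) such that sup_{z∈K} ‖Y_n(z) − 𝒴(z)‖ → 0 as n → ∞, where 𝒴 : K → M₂(ℂ) is such that for every z ∈ K the matrix 𝒴(z) has real entries, is invertible, and satisfies discr 𝒴(z) < 0. Then the family of quadratic forms Q_n^z(v) = ⟨sym[E·Y_n(z)]·v, v⟩ is uniformly non-degenerated on K: there exist c₁ > 0, c₂ > 0 and M ≥ 1 such that c₁‖v‖² ≤ |Q_n^z(v)| ≤ c₂‖v‖² for all v ∈ ℂ², z ∈ K and n ≥ M. -/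
open Filter Matrix Topology

noncomputable section

/-- The operator norm of a 2×2 complex matrix (as operator on Euclidean ℂ²). -/
noncomputable def opNorm (X : Matrix (Fin 2) (Fin 2) ℂ) : ℝ :=
  ‖Matrix.toEuclideanCLM (𝕜 := ℂ) X‖

/-- Entrywise complex conjugation of a matrix. -/
def mconj (X : Matrix (Fin 2) (Fin 2) ℂ) : Matrix (Fin 2) (Fin 2) ℂ :=
  X.map (starRingEnd ℂ)

/-- Hermitian symmetrisation. -/
def symQ (X : Matrix (Fin 2) (Fin 2) ℂ) : Matrix (Fin 2) (Fin 2) ℂ :=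
  (2⁻¹ : ℂ) • (X + Xᴴ)

def Ematrix : Matrix (Fin 2) (Fin 2) ℂ := !![0, -1; 1, 0]

/-- One-step transfer matrix `B_j(z)`. -/
def Bmat (a b : ℕ → ℂ) (j : ℕ) (z : ℂ) : Matrix (Fin 2) (Fin 2) ℂ :=
  !![0, 1; -(a (j-1) / a j), (z - b j) / a j]

/-- `N`-step transfer matrix `X_n(z) = B_{n+N-1}(z) ⋯ B_n(z)`. -/
def transfer (a b : ℕ → ℂ) (N n : ℕ) (z : ℂ) : Matrix (Fin 2) (Fin 2) ℂ :=
  (((List.range N).map fun j => Bmat a b (n + j) z).reverse).prod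

/-- Generalised eigenvector associated with `z`. -/
def IsGenEigen (a b : ℕ → ℂ) (z : ℂ) (u : ℕ → ℂ) : Prop :=
  ¬(u 0 = 0 ∧ u 1 = 0) ∧
    ∀ n, 1 ≤ n → z * u n = a n * u (n+1) + b n * u n + a (n-1) * u (n-1)

/-- The twisted Stolz class `D̃₁(K, GL(2,ℂ))`. -/
def MemD1K (K : Set ℂ) (Y : ℕ → ℂ → Matrix (Fin 2) (Fin 2) ℂ) : Prop :=
  (∀ n, 1 ≤ n → ContinuousOn (Y n) K) ∧
  (∀ n, 1 ≤ n → ∀ z ∈ K, IsUnit (Y n z)) ∧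
  (∃ C : ℝ, ∀ n, 1 ≤ n → ∀ z ∈ K, opNorm (Y n z) ≤ C) ∧
  (∃ g : ℕ → ℝ, Summable g ∧ ∀ n, 1 ≤ n → ∀ z ∈ K,
      opNorm (Y (n+1) z - mconj (Y n z)) ≤ g n)

/-- The twisted Stolz class `D̃₁(ℂ)` for scalar sequences `(x_n : n ≥ 1)`. -/
def MemD1 (x : ℕ → ℂ) : Prop :=
  (∃ C : ℝ, ∀ n, 1 ≤ n → ‖x n‖ ≤ C) ∧
    Summable (fun n : ℕ => ‖x (n+2) - (starRingEnd ℂ) (x (n+1))‖)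

def MemD1N (N : ℕ) (x : ℕ → ℂ) : Prop := ∀ i < N, MemD1 (fun n => x (n*N+i))

/-- The quadratic form `v ↦ ⟨M v, v⟩`. -/
def Qform (M : Matrix (Fin 2) (Fin 2) ℂ) (v : Fin 2 → ℂ) : ℂ :=
  dotProduct (star v) (M.mulVec v)

def Qgam (a b : ℕ → ℂ) (N : ℕ) (γ : ℂ) (n : ℕ) (z : ℂ) (v : Fin 2 → ℂ) : ℂ :=
  Qform (symQ ((a (n+N-1) / (γ * (‖a (n+N-1)‖ : ℂ))) • (Ematrix * transfer a b N n z))) v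

def Qtil (a b : ℕ → ℂ) (N : ℕ) (γ : ℂ) (n : ℕ) (z : ℂ) (v : Fin 2 → ℂ) : ℂ :=
  Qform (symQ ((a (n+N-1) / (γ * (‖a (n+N-1)‖ : ℂ)) *
      (starRingEnd ℂ) (a (n+N-1) / a (n-1))) • (Ematrix * mconj (transfer a b N n z)))) v

/-- The `N`-shifted Turán determinant, expressed via a generalised eigenvector `u`. -/
def Sdet (a b : ℕ → ℂ) (N : ℕ) (γ : ℂ) (z : ℂ) (u : ℕ → ℂ) (n : ℕ) : ℂ :=
  (‖a (n+N-1)‖ : ℂ) * Qgam a b N γ n z ![u (n-1), u n]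

/-- Uniform non-degeneracy of a family of quadratic forms. -/
def UnifNonDeg (K : Set ℂ) (Q : ℕ → ℂ → (Fin 2 → ℂ) → ℂ) : Prop :=
  ∃ c₁ > (0:ℝ), ∃ c₂ > (0:ℝ), ∃ M : ℕ, 1 ≤ M ∧
    ∀ v : Fin 2 → ℂ, ∀ z ∈ K, ∀ n, M ≤ n →
      c₁ * (‖v 0‖^2 + ‖v 1‖^2) ≤ ‖Q n z v‖ ∧ ‖Q n z v‖ ≤ c₂ * (‖v 0‖^2 + ‖v 1‖^2)

def RealEntries (X : Matrix (Fin 2) (Fin 2) ℂ) : Prop := ∀ p q, (X p q).im = 0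

def discr (X : Matrix (Fin 2) (Fin 2) ℂ) : ℂ := (Matrix.trace X)^2 - 4 * X.det

/-- Periodic one-step matrix `𝔅_j(x)` (real). -/
def pB (α β : ℤ → ℝ) (j : ℤ) (x : ℝ) : Matrix (Fin 2) (Fin 2) ℝ :=
  !![0, 1; -(α (j-1) / α j), (x - β j) / α j]

/-- Periodic transfer matrix `𝔛_i(x) = 𝔅_{i+N-1}(x) ⋯ 𝔅_i(x)`. -/
def pX (α β : ℤ → ℝ) (N : ℕ) (i : ℤ) (x : ℝ) : Matrix (Fin 2) (Fin 2) ℝ :=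
  (((List.range N).map fun j => pB α β (i + j) x).reverse).prod

/-- The generalised eigenvector with initial data `α`. -/
def gev (a b : ℕ → ℂ) (z : ℂ) (α : Fin 2 → ℂ) : ℕ → ℂ
  | 0 => α 0
  | 1 => α 1
  | n+2 => ((z - b (n+1)) * gev a b z α (n+1) - a n * gev a b z α n) / a (n+1)

end

open Matrix

section Aux
noncomputable section

lemma euclid_coord_le (w : EuclideanSpace ℂ (Fin 2)) (p : Fin 2) : ‖w p‖ ≤ ‖w‖ := by
  rw [EuclideanSpace.norm_eq]
  refine Real.le_sqrt_of_sq_le ?_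
  exact Finset.single_le_sum (f := fun i => ‖w i‖^2) (fun i _ => sq_nonneg _) (Finset.mem_univ p)

lemma entry_le_opNorm (X : Matrix (Fin 2) (Fin 2) ℂ) (p q : Fin 2) : ‖X p q‖ ≤ opNorm X := by
  have h := (Matrix.toEuclideanCLM (𝕜 := ℂ) X).le_opNorm ((WithLp.equiv 2 _).symm (Pi.single q 1))
  have hn : ‖((WithLp.equiv 2 (Fin 2 → ℂ)).symm (Pi.single q 1) : EuclideanSpace ℂ (Fin 2))‖ = 1 := by
    simp [EuclideanSpace.norm_single (𝕜 := ℂ) q 1]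
  rw [hn, mul_one] at h
  refine le_trans ?_ h
  have := euclid_coord_le ((Matrix.toEuclideanCLM (𝕜 := ℂ) X) ((WithLp.equiv 2 _).symm (Pi.single q 1))) p
  refine le_trans (le_of_eq ?_) this
  rw [WithLp.equiv_symm_apply, Matrix.toEuclideanCLM_toLp]
  congr 1
  simp [Matrix.toLin'_apply, Matrix.mulVec_single]

lemma Qform_eval (M : Matrix (Fin 2) (Fin 2) ℂ) (v : Fin 2 → ℂ) :
    Qform M v = star (v 0) * (M 0 0 * v 0 + M 0 1 * v 1)
      + star (v 1) * (M 1 0 * v 0 + M 1 1 * v 1) := by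
  simp [Qform, dotProduct, Matrix.mulVec, Fin.sum_univ_two]

lemma Qform_sub (M N : Matrix (Fin 2) (Fin 2) ℂ) (v : Fin 2 → ℂ) :
    Qform M v - Qform N v = Qform (M - N) v := by
  simp only [Qform_eval, Matrix.sub_apply]; ring

lemma Qform_norm_le (M : Matrix (Fin 2) (Fin 2) ℂ) (v : Fin 2 → ℂ) :
    ‖Qform M v‖ ≤ (‖M 0 0‖ + ‖M 0 1‖ + ‖M 1 0‖ + ‖M 1 1‖) * (‖v 0‖^2 + ‖v 1‖^2) := by
  rw [Qform_eval]
  set x := ‖v 0‖; set y := ‖v 1‖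
  have hx : (0:ℝ) ≤ x := norm_nonneg _
  have hy : (0:ℝ) ≤ y := norm_nonneg _
  have h1 : ‖star (v 0) * (M 0 0 * v 0 + M 0 1 * v 1)‖ ≤ ‖M 0 0‖ * x^2 + ‖M 0 1‖ * (x*y) := by
    calc ‖star (v 0) * (M 0 0 * v 0 + M 0 1 * v 1)‖
        ≤ x * (‖M 0 0‖ * x + ‖M 0 1‖ * y) := by
          rw [norm_mul, norm_star]
          gcongr
          exact le_trans (norm_add_le _ _) (by rw [norm_mul, norm_mul])
      _ = ‖M 0 0‖ * x^2 + ‖M 0 1‖ * (x*y) := by ring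
  have h2 : ‖star (v 1) * (M 1 0 * v 0 + M 1 1 * v 1)‖ ≤ ‖M 1 0‖ * (x*y) + ‖M 1 1‖ * y^2 := by
    calc ‖star (v 1) * (M 1 0 * v 0 + M 1 1 * v 1)‖
        ≤ y * (‖M 1 0‖ * x + ‖M 1 1‖ * y) := by
          rw [norm_mul, norm_star]
          gcongr
          exact le_trans (norm_add_le _ _) (by rw [norm_mul, norm_mul])
      _ = ‖M 1 0‖ * (x*y) + ‖M 1 1‖ * y^2 := by ring
  have hxy : x * y ≤ x^2 + y^2 := by nlinarith [sq_nonneg (x - y)]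
  have := norm_add_le (star (v 0) * (M 0 0 * v 0 + M 0 1 * v 1)) (star (v 1) * (M 1 0 * v 0 + M 1 1 * v 1))
  have hM0 : (0:ℝ) ≤ ‖M 0 0‖ := norm_nonneg _
  have hM1 : (0:ℝ) ≤ ‖M 0 1‖ := norm_nonneg _
  have hM2 : (0:ℝ) ≤ ‖M 1 0‖ := norm_nonneg _
  have hM3 : (0:ℝ) ≤ ‖M 1 1‖ := norm_nonneg _
  nlinarith [sq_nonneg x, sq_nonneg y]

lemma symQ_herm (X : Matrix (Fin 2) (Fin 2) ℂ) : (symQ X)ᴴ = symQ X := by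
  simp [symQ, Matrix.conjTranspose_smul, Matrix.conjTranspose_add, add_comm, Complex.conj_inv]

end
end Aux
noncomputable section

lemma qre_qim (A : Matrix (Fin 2) (Fin 2) ℂ) (hA : Aᴴ = A) (v : Fin 2 → ℂ) :
    (Qform A v).im = 0 ∧
    (Qform A v).re = (A 0 0).re * ‖v 0‖^2 + (A 1 1).re * ‖v 1‖^2
      + 2 * (star (v 0) * A 0 1 * v 1).re := by
  have h00 : ((starRingEnd ℂ) (A 0 0)) = A 0 0 := by
    conv_rhs => rw [← hA]; simp [Matrix.conjTranspose_apply]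
  have h11 : ((starRingEnd ℂ) (A 1 1)) = A 1 1 := by
    conv_rhs => rw [← hA]; simp [Matrix.conjTranspose_apply]
  have h10 : A 1 0 = (starRingEnd ℂ) (A 0 1) := by
    conv_lhs => rw [← hA]; simp [Matrix.conjTranspose_apply]
  have h00im : (A 0 0).im = 0 := by
    have := congrArg Complex.im h00
    rw [Complex.conj_im] at this; linarith
  have h11im : (A 1 1).im = 0 := by
    have := congrArg Complex.im h11
    rw [Complex.conj_im] at this; linarith
  have e0 : ((‖v 0‖^2 : ℝ) : ℂ) = (starRingEnd ℂ) (v 0) * v 0 := by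
    rw [← Complex.normSq_eq_conj_mul_self, ← Complex.sq_norm]
  have e1 : ((‖v 1‖^2 : ℝ) : ℂ) = (starRingEnd ℂ) (v 1) * v 1 := by
    rw [← Complex.normSq_eq_conj_mul_self, ← Complex.sq_norm]
  have key : Qform A v = ((‖v 0‖^2 : ℝ) : ℂ) * A 0 0 + ((‖v 1‖^2 : ℝ) : ℂ) * A 1 1
      + (star (v 0) * A 0 1 * v 1 + (starRingEnd ℂ) (star (v 0) * A 0 1 * v 1)) := by
    rw [Qform_eval, h10, e0, e1]
    simp only [Complex.star_def, _root_.map_mul, Complex.conj_conj]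
    ring
  constructor
  · rw [key]
    simp [Complex.add_im, Complex.mul_im, Complex.ofReal_im, Complex.ofReal_re,
      h00im, h11im, Complex.conj_im, Complex.conj_re, ← Complex.ofReal_pow]
    ring
  · rw [key]
    simp [Complex.add_re, Complex.mul_re, Complex.ofReal_im, Complex.ofReal_re,
      h00im, h11im, Complex.conj_re, Complex.conj_im, ← Complex.ofReal_pow]
    ring

lemma amgm_aux (p q c x y : ℝ) (hp : 0 ≤ p) (hq : 0 ≤ q)
    (hx : 0 ≤ x) (hy : 0 ≤ y) (h : c^2 ≤ p*q) : 2*(c*x*y) ≤ p*x^2 + q*y^2 := by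
  set sp := Real.sqrt p with hsp
  set sq := Real.sqrt q with hsq
  have hp' : sp^2 = p := Real.sq_sqrt hp
  have hq' : sq^2 = q := Real.sq_sqrt hq
  have hsp0 : 0 ≤ sp := Real.sqrt_nonneg _
  have hsq0 : 0 ≤ sq := Real.sqrt_nonneg _
  have hcle : c ≤ sp * sq := by
    nlinarith [sq_nonneg (c - sp*sq), sq_nonneg (c + sp*sq), mul_nonneg hsp0 hsq0]
  nlinarith [sq_nonneg (sp*x - sq*y), mul_nonneg hx hy]

lemma pos_case (δ B a d c x y t : ℝ) (hδ : 0 < δ) (hB : 0 < B)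
    (hdet : δ + c^2 ≤ a*d) (h0a : 0 < a) (haB : a ≤ B) (hdB : d ≤ B)
    (hc : 0 ≤ c) (hx : 0 ≤ x) (hy : 0 ≤ y) (htb : |t| ≤ c*x*y) :
    δ/(2*B) * (x^2+y^2) ≤ a*x^2 + d*y^2 + 2*t := by
  set ε := δ/(2*B) with hε
  have hε0 : 0 < ε := by positivity
  have hεB : ε * (2*B) = δ := by
    rw [hε]; exact div_mul_cancel₀ _ (by positivity)
  have hdpos : 0 < d := by nlinarith
  have h2ε : 2*ε ≤ a := by
    have h1 : δ ≤ a*B := by nlinarith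
    have e : 2*ε = δ/B := by rw [hε]; field_simp
    rw [e, div_le_iff₀ hB]; nlinarith
  have h2ε' : ε ≤ d := by
    have h1 : δ ≤ d*(2*B) := by nlinarith
    rw [hε, div_le_iff₀ (show (0:ℝ) < 2*B by linarith)]; nlinarith
  have hpq : c^2 ≤ (a-ε) * (d-ε) := by nlinarith [mul_le_mul_of_nonneg_left haB hε0.le, mul_le_mul_of_nonneg_left hdB hε0.le, sq_nonneg ε]
  have key := amgm_aux (a-ε) (d-ε) c x y (by linarith) (by linarith) hx hy hpq
  obtain ⟨ht1, ht2⟩ := abs_le.mp htb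
  nlinarith

lemma herm_lower (A : Matrix (Fin 2) (Fin 2) ℂ) (hA : Aᴴ = A) (δ B : ℝ)
    (hδ : 0 < δ) (hB : 0 < B)
    (hdet : δ ≤ (A 0 0).re * (A 1 1).re - ‖A 0 1‖^2)
    (ha : |(A 0 0).re| ≤ B) (hd : |(A 1 1).re| ≤ B) (v : Fin 2 → ℂ) :
    δ/(2*B) * (‖v 0‖^2 + ‖v 1‖^2) ≤ ‖Qform A v‖ := by
  obtain ⟨him, hre⟩ := qre_qim A hA v
  have htb : |(star (v 0) * A 0 1 * v 1).re| ≤ ‖A 0 1‖ * ‖v 0‖ * ‖v 1‖ := by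
    calc |(star (v 0) * A 0 1 * v 1).re| ≤ ‖star (v 0) * A 0 1 * v 1‖ :=
      Complex.abs_re_le_norm _
    _ = ‖v 0‖ * ‖A 0 1‖ * ‖v 1‖ := by rw [norm_mul, norm_mul, norm_star]
    _ = ‖A 0 1‖ * ‖v 0‖ * ‖v 1‖ := by ring
  have hQ : ‖Qform A v‖ =
      |(A 0 0).re * ‖v 0‖^2 + (A 1 1).re * ‖v 1‖^2 + 2*(star (v 0) * A 0 1 * v 1).re| := by
    have h2 : Qform A v = (((Qform A v).re : ℝ) : ℂ) := by
      apply Complex.ext <;> simp [him]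
    rw [h2, Complex.norm_real, hre, Real.norm_eq_abs]
  rw [hQ]
  have had : δ + ‖A 0 1‖^2 ≤ (A 0 0).re * (A 1 1).re := by linarith
  have hx : (0:ℝ) ≤ ‖v 0‖ := norm_nonneg _
  have hy : (0:ℝ) ≤ ‖v 1‖ := norm_nonneg _
  have hc0 : (0:ℝ) ≤ ‖A 0 1‖ := norm_nonneg _
  rcases lt_trichotomy ((A 0 0).re) 0 with haneg | hzero | hapos
  · have h := pos_case δ B (-(A 0 0).re) (-(A 1 1).re) ‖A 0 1‖ ‖v 0‖ ‖v 1‖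
      (-(star (v 0) * A 0 1 * v 1).re) hδ hB (by nlinarith) (by linarith)
      (by have := abs_le.mp ha; linarith) (by have := abs_le.mp hd; linarith)
      hc0 hx hy (by rw [abs_neg]; exact htb)
    have h2 : δ/(2*B) * (‖v 0‖^2 + ‖v 1‖^2) ≤
        -((A 0 0).re * ‖v 0‖^2 + (A 1 1).re * ‖v 1‖^2 + 2*(star (v 0) * A 0 1 * v 1).re) := by
      linarith
    exact le_trans h2 (neg_le_abs _)
  · exfalso; rw [hzero] at had; nlinarith
  · have h := pos_case δ B ((A 0 0).re) ((A 1 1).re) ‖A 0 1‖ ‖v 0‖ ‖v 1‖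
      ((star (v 0) * A 0 1 * v 1).re) hδ hB had hapos
      (le_trans (le_abs_self _) ha) (le_trans (le_abs_self _) hd)
      hc0 hx hy htb
    exact le_trans h (le_abs_self _)

lemma symQ_entries (X : Matrix (Fin 2) (Fin 2) ℂ) (hre : ∀ p q, (X p q).im = 0) :
    symQ (Ematrix * X) =
      !![-(X 1 0), 2⁻¹*(X 0 0 - X 1 1); 2⁻¹*(X 0 0 - X 1 1), X 0 1] := by
  have conj_eq : ∀ p q, (starRingEnd ℂ) (X p q) = X p q := fun p q =>
    Complex.conj_eq_iff_im.mpr (hre p q)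
  have hE : Ematrix * X = !![-(X 1 0), -(X 1 1); X 0 0, X 0 1] := by
    ext p q; fin_cases p <;> fin_cases q <;>
      simp [Ematrix, Matrix.mul_apply, Fin.sum_univ_two]
  rw [symQ, hE]
  ext p q
  fin_cases p <;> fin_cases q <;>
    simp [Matrix.conjTranspose_apply, Matrix.smul_apply, Matrix.add_apply,
      Complex.star_def, conj_eq] <;> ring

lemma symQ_pos (X : Matrix (Fin 2) (Fin 2) ℂ) (hre : ∀ p q, (X p q).im = 0)
    (h : (_root_.discr X).re < 0) :
    0 < ((symQ (Ematrix * X)) 0 0).re * ((symQ (Ematrix * X)) 1 1).re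
        - ‖(symQ (Ematrix * X)) 0 1‖^2 := by
  rw [symQ_entries X hre]
  have habs : ‖X 0 0 - X 1 1‖ = |(X 0 0).re - (X 1 1).re| := by
    have e : X 0 0 - X 1 1 = (((X 0 0).re - (X 1 1).re : ℝ) : ℂ) := by
      apply Complex.ext <;> simp [hre 0 0, hre 1 1]
    rw [e, Complex.norm_real, Real.norm_eq_abs]
  have hdiscr : (_root_.discr X).re = ((X 0 0).re + (X 1 1).re)^2
      - 4*((X 0 0).re * (X 1 1).re - (X 0 1).re * (X 1 0).re) := by
    rw [_root_.discr, Matrix.trace_fin_two, Matrix.det_fin_two]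
    simp [Complex.mul_re, Complex.add_re, Complex.sub_re, Complex.mul_im,
      Complex.add_im, Complex.sub_im, hre 0 0, hre 1 1, hre 0 1, hre 1 0, pow_two]
  rw [hdiscr] at h
  simp [habs]
  nlinarith [sq_abs ((X 0 0).re - (X 1 1).re), sq_nonneg ((X 0 0).re - (X 1 1).re)]

lemma Emul (D : Matrix (Fin 2) (Fin 2) ℂ) :
    Ematrix * D = !![-(D 1 0), -(D 1 1); D 0 0, D 0 1] := by
  ext p q; fin_cases p <;> fin_cases q <;>
    simp [Ematrix, Matrix.mul_apply, Fin.sum_univ_two]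

lemma opNorm_nonneg' (D : Matrix (Fin 2) (Fin 2) ℂ) : 0 ≤ opNorm D := norm_nonneg _

lemma entry_symQ_le (D : Matrix (Fin 2) (Fin 2) ℂ) (p q : Fin 2) :
    ‖symQ (Ematrix * D) p q‖ ≤ opNorm D := by
  have key : ∀ (w u : ℂ), ‖w‖ ≤ opNorm D → ‖u‖ ≤ opNorm D →
      ‖(2⁻¹:ℂ) * (w + u)‖ ≤ opNorm D := by
    intro w u hw hu
    rw [norm_mul]
    have h2 : ‖(2⁻¹:ℂ)‖ = 2⁻¹ := by simp
    rw [h2]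
    calc 2⁻¹ * ‖w + u‖ ≤ 2⁻¹ * (‖w‖ + ‖u‖) := by
          have := norm_add_le w u; linarith
    _ ≤ opNorm D := by linarith
  have e : ∀ r s, ‖(Ematrix * D) r s‖ ≤ opNorm D := by
    intro r s
    fin_cases r
    · show ‖(Ematrix * D) 0 s‖ ≤ opNorm D
      have h : (Ematrix * D) 0 s = -(D 1 s) := by
        simp [Matrix.mul_apply, Fin.sum_univ_two, Ematrix]
      rw [h, norm_neg]; exact entry_le_opNorm D _ _
    · show ‖(Ematrix * D) 1 s‖ ≤ opNorm D
      have h : (Ematrix * D) 1 s = D 0 s := by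
        simp [Matrix.mul_apply, Fin.sum_univ_two, Ematrix]
      rw [h]; exact entry_le_opNorm D _ _
  have : symQ (Ematrix * D) p q =
      (2⁻¹:ℂ) * ((Ematrix * D) p q + star ((Ematrix * D) q p)) := by
    simp only [symQ, Matrix.smul_apply, Matrix.add_apply, Matrix.conjTranspose_apply, smul_eq_mul]
  rw [this]
  exact key _ _ (e p q) (by rw [norm_star]; exact e q p)

lemma unif_entry_cont (K : Set ℂ) (Y : ℕ → ℂ → Matrix (Fin 2) (Fin 2) ℂ)
    (𝒴 : ℂ → Matrix (Fin 2) (Fin 2) ℂ)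
    (hYcont : ∀ n, 1 ≤ n → ContinuousOn (Y n) K)
    (hconv : ∀ ε > (0:ℝ), ∃ M : ℕ, ∀ n, M ≤ n → ∀ z ∈ K, opNorm (Y n z - 𝒴 z) < ε)
    (p q : Fin 2) : ContinuousOn (fun z => 𝒴 z p q) K := by
  have ht : TendstoUniformlyOn (fun n z => Y n z p q) (fun z => 𝒴 z p q) Filter.atTop K := by
    rw [Metric.tendstoUniformlyOn_iff]
    intro ε hε
    obtain ⟨M, hM⟩ := hconv ε hε
    filter_upwards [Filter.eventually_ge_atTop M] with n hn
    intro z hz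
    have h1 : ‖(Y n z - 𝒴 z) p q‖ ≤ opNorm (Y n z - 𝒴 z) := entry_le_opNorm _ _ _
    have h2 := hM n hn z hz
    rw [Complex.dist_eq]
    have e : 𝒴 z p q - Y n z p q = -((Y n z - 𝒴 z) p q) := by
      simp [Matrix.sub_apply]
    rw [e, norm_neg]
    linarith
  refine ht.continuousOn (Filter.Eventually.frequently ?_)
  filter_upwards [Filter.eventually_ge_atTop 1] with n hn
  exact ((continuous_apply q).comp (continuous_apply p)).comp_continuousOn (hYcont n hn)

lemma symQ_sub (P Q : Matrix (Fin 2) (Fin 2) ℂ) : symQ (P - Q) = symQ P - symQ Q := by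
  simp only [symQ, Matrix.conjTranspose_sub, smul_sub]
  rw [← smul_sub]
  congr 1
  abel

open Filter Matrix Topology in
/-- Proposition 5: uniform non-degeneracy of the quadratic forms associated with a
uniformly convergent sequence of matrices whose limit is real, invertible and has
negative discriminant. -/
theorem statement5
    (K : Set ℂ) (hK : IsCompact K)
    (Y : ℕ → ℂ → Matrix (Fin 2) (Fin 2) ℂ)
    (hYcont : ∀ n, 1 ≤ n → ContinuousOn (Y n) K)
    (𝒴 : ℂ → Matrix (Fin 2) (Fin 2) ℂ)
    (hconv : ∀ ε > (0:ℝ), ∃ M : ℕ, ∀ n, M ≤ n → ∀ z ∈ K, opNorm (Y n z - 𝒴 z) < ε)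
    (h𝒴 : ∀ z ∈ K, RealEntries (𝒴 z) ∧ IsUnit (𝒴 z) ∧ (_root_.discr (𝒴 z)).re < 0) :
    UnifNonDeg K (fun n z v => Qform (symQ (Ematrix * Y n z)) v) := by
  rcases K.eq_empty_or_nonempty with hKe | hKne
  · exact ⟨1, one_pos, 1, one_pos, 1, le_refl 1,
      fun v z hz n hn => by rw [hKe] at hz; exact absurd hz (Set.notMem_empty z)⟩
  set A : ℂ → Matrix (Fin 2) (Fin 2) ℂ := fun z => symQ (Ematrix * 𝒴 z) with hAdef
  have hYe : ∀ p q : Fin 2, ContinuousOn (fun z => 𝒴 z p q) K := fun p q =>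
    unif_entry_cont K Y 𝒴 hYcont hconv p q
  have hAe : ∀ z ∈ K, A z =
      !![-(𝒴 z 1 0), 2⁻¹*(𝒴 z 0 0 - 𝒴 z 1 1); 2⁻¹*(𝒴 z 0 0 - 𝒴 z 1 1), 𝒴 z 0 1] :=
    fun z hz => symQ_entries (𝒴 z) (h𝒴 z hz).1
  have hc00 : ContinuousOn (fun z => A z 0 0) K := by
    refine ContinuousOn.congr ((hYe 1 0).neg) ?_
    intro z hz; simp [hAe z hz]
  have hc01 : ContinuousOn (fun z => A z 0 1) K := by
    refine ContinuousOn.congr (f := fun z => (2⁻¹:ℂ) * (𝒴 z 0 0 - 𝒴 z 1 1))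
      (continuousOn_const.mul ((hYe 0 0).sub (hYe 1 1))) ?_
    intro z hz; simp [hAe z hz]
  have hc10 : ContinuousOn (fun z => A z 1 0) K := by
    refine ContinuousOn.congr (f := fun z => (2⁻¹:ℂ) * (𝒴 z 0 0 - 𝒴 z 1 1))
      (continuousOn_const.mul ((hYe 0 0).sub (hYe 1 1))) ?_
    intro z hz; simp [hAe z hz]
  have hc11 : ContinuousOn (fun z => A z 1 1) K := by
    refine ContinuousOn.congr (hYe 0 1) ?_
    intro z hz; simp [hAe z hz]
  set f : ℂ → ℝ := fun z => (A z 0 0).re * (A z 1 1).re - ‖A z 0 1‖^2 with hfdef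
  have hf : ContinuousOn f K := by
    refine ContinuousOn.sub (ContinuousOn.mul ?_ ?_) ((hc01.norm).pow 2)
    · exact Complex.continuous_re.comp_continuousOn hc00
    · exact Complex.continuous_re.comp_continuousOn hc11
  set G : ℂ → ℝ := fun z => ‖A z 0 0‖ + ‖A z 0 1‖ + ‖A z 1 0‖ + ‖A z 1 1‖ with hGdef
  have hG : ContinuousOn G K :=
    ((hc00.norm.add hc01.norm).add hc10.norm).add hc11.norm
  obtain ⟨z₀, hz₀K, hz₀min⟩ := hK.exists_isMinOn hKne hf
  set δ := f z₀ with hδdef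
  have hδpos : 0 < δ := symQ_pos (𝒴 z₀) (h𝒴 z₀ hz₀K).1 (h𝒴 z₀ hz₀K).2.2
  have hδle : ∀ z ∈ K, δ ≤ f z := fun z hz => hz₀min hz
  obtain ⟨z₁, hz₁K, hz₁max⟩ := hK.exists_isMaxOn hKne hG
  set CG := G z₁ with hCGdef
  have hCGle : ∀ z ∈ K, G z ≤ CG := fun z hz => hz₁max hz
  have hCG0 : 0 ≤ CG := by
    have := norm_nonneg (A z₁ 0 0); have := norm_nonneg (A z₁ 0 1)
    have := norm_nonneg (A z₁ 1 0); have := norm_nonneg (A z₁ 1 1)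
    rw [hCGdef]; simp only [hGdef]; linarith
  set B := CG + 1 with hBdef
  have hB : (0:ℝ) < B := by linarith
  set ε := δ/(2*B) with hεdef
  have hε0 : 0 < ε := by positivity
  obtain ⟨M₀, hM₀⟩ := hconv (ε/8) (by positivity)
  refine ⟨ε/2, by positivity, CG + ε/2 + 1, by positivity, max M₀ 1,
    le_max_right _ _, ?_⟩
  intro v z hz n hn
  have hAherm : (A z)ᴴ = A z := symQ_herm _
  set s := ‖v 0‖^2 + ‖v 1‖^2 with hsdef
  have hs0 : 0 ≤ s := by positivity
  -- entry bounds
  have hGz := hCGle z hz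
  have hn00 : (0:ℝ) ≤ ‖A z 0 0‖ := norm_nonneg _
  have hn01 : (0:ℝ) ≤ ‖A z 0 1‖ := norm_nonneg _
  have hn10 : (0:ℝ) ≤ ‖A z 1 0‖ := norm_nonneg _
  have hn11 : (0:ℝ) ≤ ‖A z 1 1‖ := norm_nonneg _
  have hGzs : ‖A z 0 0‖ + ‖A z 0 1‖ + ‖A z 1 0‖ + ‖A z 1 1‖ ≤ CG := hGz
  have hb00 : |(A z 0 0).re| ≤ B := by
    have := Complex.abs_re_le_norm (A z 0 0); rw [hBdef]
    linarith
  have hb11 : |(A z 1 1).re| ≤ B := by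
    have := Complex.abs_re_le_norm (A z 1 1); rw [hBdef]
    linarith
  -- lower bound on limit form
  have hlow : ε * s ≤ ‖Qform (A z) v‖ := by
    have := herm_lower (A z) hAherm δ B hδpos hB (hδle z hz) hb00 hb11 v
    rw [hεdef]; exact this
  -- upper bound on limit form
  have hup : ‖Qform (A z) v‖ ≤ CG * s := by
    refine le_trans (Qform_norm_le (A z) v) ?_
    exact mul_le_mul_of_nonneg_right hGzs hs0
  -- perturbation
  have hdiff : Qform (symQ (Ematrix * Y n z)) v - Qform (A z) v
      = Qform (symQ (Ematrix * (Y n z - 𝒴 z))) v := by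
    rw [Qform_sub]
    congr 1
    rw [mul_sub, symQ_sub]
  have hop : opNorm (Y n z - 𝒴 z) < ε/8 :=
    hM₀ n (le_trans (le_max_left _ _) hn) z hz
  have hpert : ‖Qform (symQ (Ematrix * Y n z)) v - Qform (A z) v‖ ≤ (ε/2) * s := by
    rw [hdiff]
    refine le_trans (Qform_norm_le _ v) ?_
    have hsum : ‖symQ (Ematrix * (Y n z - 𝒴 z)) 0 0‖ + ‖symQ (Ematrix * (Y n z - 𝒴 z)) 0 1‖
        + ‖symQ (Ematrix * (Y n z - 𝒴 z)) 1 0‖ + ‖symQ (Ematrix * (Y n z - 𝒴 z)) 1 1‖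
        ≤ ε/2 := by
      have h1 := entry_symQ_le (Y n z - 𝒴 z) 0 0
      have h2 := entry_symQ_le (Y n z - 𝒴 z) 0 1
      have h3 := entry_symQ_le (Y n z - 𝒴 z) 1 0
      have h4 := entry_symQ_le (Y n z - 𝒴 z) 1 1
      have hstep := add_le_add (add_le_add (add_le_add h1 h2) h3) h4
      have : opNorm (Y n z - 𝒴 z) + opNorm (Y n z - 𝒴 z) + opNorm (Y n z - 𝒴 z)
          + opNorm (Y n z - 𝒴 z) ≤ ε/2 := by linarith
      linarith
    exact mul_le_mul_of_nonneg_right hsum hs0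
  have habs := abs_le.mp (abs_norm_sub_norm_le
    (Qform (symQ (Ematrix * Y n z)) v) (Qform (A z) v))
  clear_value A f G δ CG B ε s
  constructor
  · show ε/2 * s ≤ ‖Qform (symQ (Ematrix * Y n z)) v‖
    have h1 := habs.1
    linarith
  · show ‖Qform (symQ (Ematrix * Y n z)) v‖ ≤ (CG + ε/2 + 1) * s
    have h2 := habs.2
    linarith
end
end

section
/- Let N be a positive integer and γ ∈ ℂ with |γ| = 1. For every α ∈ ℂ² ∖ {0}, z ∈ ℂ and n ≥ 1 one has the identity S_n^γ(α, z) = |a_{n+N−1}| · Q̃_n^{z,γ}((u_{n+N−1}, u_{n+N})), where u is the generalised eigenvector associated with z with (u_0, u_1) = α and Q̃_n^{z,γ}(v) = ⟨sym[(a_{n+N−1}/(γ·|a_{n+N−1}|)) · conj(a_{n+N−1}/a_{n−1}) · E · conj(X_n(z))]·v, v⟩. -/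
open Filter Matrix Topology

lemma transfer_succ (a b : ℕ → ℂ) (N n : ℕ) (z : ℂ) :
    transfer a b (N+1) n z = Bmat a b (n+N) z * transfer a b N n z := by
  simp [transfer, List.range_succ]

lemma qform_smul (c : ℂ) (M : Matrix (Fin 2) (Fin 2) ℂ) (v : Fin 2 → ℂ) :
    Qform (c • M) v = c * Qform M v := by
  simp [Qform, Matrix.smul_mulVec, dotProduct_smul]
  ring

lemma qform_symQ (M : Matrix (Fin 2) (Fin 2) ℂ) (v : Fin 2 → ℂ) :
    Qform (symQ M) v = (2⁻¹ : ℂ) * (Qform M v + (starRingEnd ℂ) (Qform M v)) := by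
  simp only [Qform, symQ, dotProduct, Matrix.mulVec, Matrix.smul_apply,
    Matrix.add_apply, Matrix.conjTranspose_apply, Fin.sum_univ_two, Pi.star_apply,
    _root_.map_add, _root_.map_mul, Complex.conj_conj, RingHom.id_apply, smul_eq_mul,
    Complex.star_def]
  ring

lemma qform_key (X : Matrix (Fin 2) (Fin 2) ℂ) (v : Fin 2 → ℂ) :
    Qform (Ematrix * mconj X) (X.mulVec v) =
      (starRingEnd ℂ) X.det * Qform (Ematrix * X) v := by
  simp only [Qform, Ematrix, mconj, Matrix.det_fin_two, dotProduct,
    Matrix.mulVec, Matrix.mul_apply, Matrix.map_apply, Fin.sum_univ_two, Pi.star_apply,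
    _root_.map_add, _root_.map_mul, map_sub, Complex.star_def]
  norm_num
  ring

lemma bmat_det (a b : ℕ → ℂ) (j : ℕ) (z : ℂ) :
    (Bmat a b j z).det = a (j-1) / a j := by
  simp [Bmat, Matrix.det_fin_two_of]

lemma transfer_det (a b : ℕ → ℂ) (ha : ∀ n, a n ≠ 0) (n : ℕ) (hn : 1 ≤ n) (z : ℂ) :
    ∀ N, (transfer a b N n z).det = a (n-1) / a (n+N-1)
  | 0 => by
    have h : n + 0 - 1 = n - 1 := by omega
    simp [transfer, h, (div_self (ha (n-1))).symm]
  | (N+1) => by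
    rw [transfer_succ, Matrix.det_mul, bmat_det, transfer_det a b ha n hn z N]
    have h2 : n + (N+1) - 1 = n + N := by omega
    have h3 : n + N - 1 = n + N - 1 := rfl
    rw [h2, div_mul_div_comm, mul_comm (a (n+N-1)) (a (n-1)),
      mul_comm (a (n+N)) (a (n+N-1)), mul_comm (a (n+N-1)) (a (n+N)),
      mul_div_mul_right _ _ (ha (n+N-1))]

lemma transfer_mulVec (a b : ℕ → ℂ) (ha : ∀ n, a n ≠ 0) (z : ℂ) (u : ℕ → ℂ)
    (hu : ∀ m, 1 ≤ m → z * u m = a m * u (m+1) + b m * u m + a (m-1) * u (m-1))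
    (n : ℕ) (hn : 1 ≤ n) :
    ∀ N, (transfer a b N n z).mulVec ![u (n-1), u n] = ![u (n+N-1), u (n+N)]
  | 0 => by
    have h : n + 0 - 1 = n - 1 := by omega
    simp [transfer, h]
  | (N+1) => by
    rw [transfer_succ, ← Matrix.mulVec_mulVec, transfer_mulVec a b ha z u hu n hn N]
    have h2 : n + (N+1) - 1 = n + N := by omega
    rw [h2]
    have hm : 1 ≤ n + N := by omega
    have hrec := hu (n+N) hm
    have e1 : n + N - 1 + 1 = n + N := by omega
    have hu1 : u (n+N+1) = ((z - b (n+N)) * u (n+N) - a (n+N-1) * u (n+N-1)) / a (n+N) := by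
      rw [eq_div_iff (ha (n+N))]
      linear_combination -hrec
    funext i
    fin_cases i
    · simp [Bmat, Matrix.mulVec, dotProduct, Fin.sum_univ_two]
    · simp only [Bmat, Matrix.mulVec, dotProduct, Fin.sum_univ_two,
        Matrix.cons_val_one, Matrix.head_cons, Matrix.cons_val_zero,
        Matrix.cons_val', Matrix.empty_val', Matrix.cons_val_fin_one,
        Matrix.head_fin_const, Matrix.of_apply, Fin.isValue, Fin.mk_one]
      rw [show n + (N+1) = n + N + 1 from rfl, hu1]
      field_simp
      ring

open Filter Matrix Topology in
/-- Proposition 6: the alternative formula for the shifted Turán determinant. -/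
theorem statement6
    (a b : ℕ → ℂ) (ha : ∀ n, a n ≠ 0)
    (N : ℕ) (hN : 1 ≤ N) (γ : ℂ) (hγ : ‖γ‖ = 1)
    (z : ℂ) (u : ℕ → ℂ) (hu : IsGenEigen a b z u)
    (n : ℕ) (hn : 1 ≤ n) :
    Sdet a b N γ z u n =
      (‖a (n+N-1)‖ : ℂ) * Qtil a b N γ n z ![u (n+N-1), u (n+N)] := by
  obtain ⟨-, hrec⟩ := hu
  have hw := transfer_mulVec a b ha z u hrec n hn N
  have hd := transfer_det a b ha n hn z N
  unfold Sdet Qgam Qtil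
  rw [← hw]
  congr 1
  rw [qform_symQ, qform_symQ, qform_smul, qform_smul, qform_key, hd]
  have hcc : (starRingEnd ℂ) (a (n+N-1) / a (n-1)) * (starRingEnd ℂ) (a (n-1) / a (n+N-1))
      = 1 := by
    rw [← _root_.map_mul, div_mul_div_comm, mul_comm (a (n+N-1)) (a (n-1)),
      div_self (mul_ne_zero (ha _) (ha _)), _root_.map_one]
  have hcc2 : (a (n+N-1) / a (n-1)) * (a (n-1) / a (n+N-1)) = 1 := by
    rw [div_mul_div_comm, mul_comm (a (n+N-1)) (a (n-1)),
      div_self (mul_ne_zero (ha _) (ha _))]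
  simp only [_root_.map_mul, Complex.conj_conj]
  linear_combination
    (-(2⁻¹ * Qform (Ematrix * transfer a b N n z) ![u (n-1), u n]
        * (a (n+N-1) / (γ * (‖a (n+N-1)‖ : ℂ))))) * hcc +
    (-(2⁻¹ * (starRingEnd ℂ) (Qform (Ematrix * transfer a b N n z) ![u (n-1), u n])
        * (starRingEnd ℂ) (a (n+N-1) / (γ * (‖a (n+N-1)‖ : ℂ))))) * hcc2
end
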